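/- Let ρ : G → GL(n, ℂ) be a quasi-primitive faithful representation of a finite group G. Then every normal abelian subgroup A of G is contained in the center Z(G), the center Z(G) is cyclic, and ρ maps Z(G) to scalar matrices. -/

import Mathlib

open Module

section Defs

variable {G : Type*} [Group G]

/-- A representation is irreducible if the module is nontrivial and the only
invariant submodules are `⊥` and `⊤`. -/
def RepIsIrred {V : Type*} [AddCommGroup V] [Module ℂ V]
    (ρ : Representation ℂ G V) : Prop :=
  (⊥ : Submodule ℂ V) ≠ ⊤ ∧
    ∀ W : Submodule ℂ V, (∀ g : G, W.map (ρ g) ≤ W) → W = ⊥ ∨ W = ⊤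

/-- `m` copies of the representation `τ`. -/
noncomputable def copiesRep {H : Type*} [Group H] {d : ℕ} (m : ℕ)
    (τ : Representation ℂ H (Fin d → ℂ)) :
    Representation ℂ H (Fin m → Fin d → ℂ) where
  toFun g := (τ g).compLeft (Fin m)
  map_one' := by
    apply LinearMap.ext; intro f; funext i
    simp [LinearMap.compLeft]
  map_mul' := by
    intro a b
    apply LinearMap.ext; intro f; funext i
    simp [LinearMap.compLeft]; rfl

/-- The restriction of `ρ` to `N` is homogeneous (isotypic): it is isomorphic,
`N`-equivariantly, to a direct sum of copies of a single irreducible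
representation of `N`. -/
def RestrictionHomogeneous {n : ℕ} (ρ : Representation ℂ G (Fin n → ℂ))
    (N : Subgroup G) : Prop :=
  ∃ (m d : ℕ) (τ : Representation ℂ ↥N (Fin d → ℂ)), RepIsIrred τ ∧
    ∃ e : (Fin n → ℂ) ≃ₗ[ℂ] (Fin m → Fin d → ℂ),
      ∀ (g : ↥N) (v : Fin n → ℂ), e (ρ (↑g) v) = copiesRep m τ g (e v)

end Defs

/-- Key lemma: if the restriction of `ρ` to an "abelian" subgroup `N` is
homogeneous, then `ρ` maps every element of `N` to a scalar. -/
theorem key_scalar {G : Type*} [Group G] {n : ℕ}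
    (ρ : Representation ℂ G (Fin n → ℂ)) (N : Subgroup G)
    (hcomm : ∀ a ∈ N, ∀ b ∈ N, a * b = b * a)
    (hhom : RestrictionHomogeneous ρ N) :
    ∀ a ∈ N, ∃ c : ℂ, ρ a = c • (1 : Module.End ℂ (Fin n → ℂ)) := by
  obtain ⟨m, d, τ, ⟨hτne, hτirr⟩, e, he⟩ := hhom
  intro a ha
  set a' : ↥N := ⟨a, ha⟩ with ha'
  have hnt : Nontrivial (Fin d → ℂ) := by
    by_contra h
    rw [not_nontrivial_iff_subsingleton] at h
    exact hτne (Subsingleton.elim _ _)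
  obtain ⟨c, hc⟩ := Module.End.exists_eigenvalue (τ a' : Module.End ℂ (Fin d → ℂ))
  set W := Module.End.eigenspace (τ a' : Module.End ℂ (Fin d → ℂ)) c with hW
  have hinv : ∀ g : ↥N, W.map (τ g) ≤ W := by
    intro g v hv
    obtain ⟨w, hw, rfl⟩ := hv
    rw [SetLike.mem_coe] at hw
    rw [hW, Module.End.mem_eigenspace_iff] at hw
    rw [Module.End.mem_eigenspace_iff]
    have hcomm' : a' * g = g * a' := Subtype.ext (hcomm a ha g g.2)
    calc (τ a') (τ g w) = ((τ a') * (τ g)) w := rfl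
      _ = τ (a' * g) w := by rw [map_mul]
      _ = τ (g * a') w := by rw [hcomm']
      _ = (τ g) ((τ a') w) := by rw [map_mul]; rfl
      _ = c • (τ g) w := by rw [hw, map_smul]
  have hWtop : W = ⊤ := by
    rcases hτirr W hinv with h | h
    · exact absurd h hc
    · exact h
  have hτscal : ∀ v : Fin d → ℂ, τ a' v = c • v := by
    intro v
    have : v ∈ W := hWtop ▸ Submodule.mem_top
    rwa [hW, Module.End.mem_eigenspace_iff] at this
  refine ⟨c, ?_⟩
  apply LinearMap.ext
  intro v
  apply e.injective
  have := he a' v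
  rw [this]
  have h2 : copiesRep m τ a' (e v) = c • (e v) := by
    funext i
    show ((τ a').compLeft (Fin m)) (e v) i = _
    rw [LinearMap.compLeft_apply]
    simp [Function.comp, hτscal]
  rw [h2]
  show c • e v = e ((c • (1 : Module.End ℂ (Fin n → ℂ))) v)
  rw [LinearMap.smul_apply, Module.End.one_apply, map_smul]

-- STATEMENT 3
theorem stmt3 {G : Type*} [Group G] [Finite G] {n : ℕ}
    (ρ : Representation ℂ G (Fin n → ℂ)) (hfaith : Function.Injective ρ)
    (hirr : RepIsIrred ρ)
    (hqp : ∀ N : Subgroup G, N.Normal → RestrictionHomogeneous ρ N) :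
    (∀ A : Subgroup G, A.Normal → (∀ a ∈ A, ∀ b ∈ A, a * b = b * a) →
      A ≤ Subgroup.center G) ∧
    IsCyclic ↥(Subgroup.center G) ∧
    (∀ z ∈ Subgroup.center G, ∃ c : ℂ,
      ρ z = c • (1 : Module.End ℂ (Fin n → ℂ))) := by
  have habel : ∀ A : Subgroup G, A.Normal → (∀ a ∈ A, ∀ b ∈ A, a * b = b * a) →
      ∀ a ∈ A, ∃ c : ℂ, ρ a = c • (1 : Module.End ℂ (Fin n → ℂ)) := by
    intro A hn hcomm
    exact key_scalar ρ A hcomm (hqp A hn)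
  have hle : ∀ A : Subgroup G, A.Normal → (∀ a ∈ A, ∀ b ∈ A, a * b = b * a) →
      A ≤ Subgroup.center G := by
    intro A hn hcomm a ha
    obtain ⟨c, hc⟩ := habel A hn hcomm a ha
    rw [Subgroup.mem_center_iff]
    intro g
    apply hfaith
    rw [map_mul, map_mul, hc]
    ext v
    simp
  have hcenter : ∀ z ∈ Subgroup.center G, ∃ c : ℂ,
      ρ z = c • (1 : Module.End ℂ (Fin n → ℂ)) := by
    apply habel
    · infer_instance
    · intro a ha b hb
      exact (Subgroup.mem_center_iff.mp ha b).symm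
  refine ⟨hle, ?_, hcenter⟩
  -- cyclicity of the center
  have hnt : Nontrivial (Fin n → ℂ) := by
    by_contra h
    rw [not_nontrivial_iff_subsingleton] at h
    exact hirr.1 (Subsingleton.elim _ _)
  obtain ⟨v0, hv0⟩ := exists_ne (0 : Fin n → ℂ)
  choose c hc using fun z : ↥(Subgroup.center G) => hcenter z z.2
  have huniq : ∀ (z : ↥(Subgroup.center G)) (c' : ℂ),
      ρ (z : G) = c' • (1 : Module.End ℂ (Fin n → ℂ)) → c' = c z := by
    intro z c' h
    have := congrFun (congrArg DFunLike.coe ((hc z).symm.trans h)) v0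
    simp only [LinearMap.smul_apply, Module.End.one_apply] at this
    by_contra hne
    exact hv0 (by
      have := sub_eq_zero.mpr this.symm
      rw [← sub_smul] at this
      exact (smul_eq_zero.mp this).resolve_left (sub_ne_zero.mpr hne))
  let f : ↥(Subgroup.center G) →* ℂ := {
    toFun := c
    map_one' := by
      refine (huniq 1 1 ?_).symm
      simp
    map_mul' := by
      intro z w
      refine (huniq (z * w) (c z * c w) ?_).symm
      push_cast [map_mul, hc z, hc w]
      ext u
      simp [mul_smul, mul_left_comm, mul_comm]
  }
  have hfinj : Function.Injective f := by
    rw [injective_iff_map_eq_one]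
    intro z hz
    have hz' : c z = 1 := hz
    apply Subtype.ext
    apply hfaith
    rw [hc z, hz', one_smul]
    simp
  exact isCyclic_of_subgroup_isDomain f hfinj
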